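/- arXiv:1607.08907 — 3 statements merged into one kernel-verified Lean document; each statement's English description precedes it below -/
import Mathlib

section
/- Let p be an odd prime, let F = ⟨x, y ∣ x^p, y^p⟩ be the free product of two cyclic groups of order p, and let i = k(p−1)+1 for some k ≥ 1. Put H = F/γ_{i+1}(F) and let u, v be the images of x, y in H. Then the set of commutators {[u,h] : h ∈ H} does not contain the subgroup γ_i(H), and likewise the set {[v,h] : h ∈ H} does not contain γ_i(H); that is, there exist w, z ∈ γ_i(H) with w ∉ {[u,h] : h ∈ H} and z ∉ {[v,h] : h ∈ H}. -/
/-- The cyclic group of order `p`. -/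
abbrev Cp (p : ℕ) := Multiplicative (ZMod p)

/-- The free product `C_p ∗ C_p` of two cyclic groups of order `p`. -/
abbrev FP (p : ℕ) := Monoid.Coprod (Cp p) (Cp p)

/-- The canonical generator `x` of the first free factor. -/
def xgen (p : ℕ) : FP p := Monoid.Coprod.inl (Multiplicative.ofAdd (1 : ZMod p))

/-- The canonical generator `y` of the second free factor. -/
def ygen (p : ℕ) : FP p := Monoid.Coprod.inr (Multiplicative.ofAdd (1 : ZMod p))

namespace CDNC

open scoped commutatorElement


abbrev Mat (p n : ℕ) := Matrix (Fin n) (Fin n) (ZMod p)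

/-- matrix supported on the `d`-th subdiagonal with coefficient function `f`. -/
def dm (p n d : ℕ) (f : ℕ → ZMod p) : Mat p n :=
  Matrix.of fun r c => if (r : ℕ) = (c : ℕ) + d then f c else 0

lemma dm_apply (p n d : ℕ) (f : ℕ → ZMod p) (r c : Fin n) :
    dm p n d f r c = if (r : ℕ) = (c : ℕ) + d then f c else 0 := rfl

lemma dm_mul (p n : ℕ) (d₁ d₂ : ℕ) (f g : ℕ → ZMod p) :
    dm p n d₁ f * dm p n d₂ g = dm p n (d₁ + d₂) (fun c => f (c + d₂) * g c) := by
  ext r c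
  simp only [Matrix.mul_apply, dm_apply]
  by_cases hc : (c : ℕ) + d₂ < n
  · rw [Finset.sum_eq_single (⟨(c : ℕ) + d₂, hc⟩ : Fin n)]
    · simp only [Fin.val_mk]
      simp only [if_true]
      by_cases hr : (r : ℕ) = (c : ℕ) + (d₁ + d₂)
      · rw [if_pos (by omega : (r : ℕ) = (c : ℕ) + d₂ + d₁), if_pos hr]
      · rw [if_neg (by omega : ¬ (r : ℕ) = (c : ℕ) + d₂ + d₁), if_neg hr, zero_mul]
    · intro b _ hb
      have hb' : ¬((b : ℕ) = (c : ℕ) + d₂) := fun h => hb (Fin.ext h)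
      rw [if_neg hb', mul_zero]
    · intro h; exact absurd (Finset.mem_univ _) h
  · rw [Finset.sum_eq_zero, if_neg (by omega)]
    intro b _
    have hb := b.isLt
    have hb' : ¬((b : ℕ) = (c : ℕ) + d₂) := by omega
    rw [if_neg hb', mul_zero]

lemma dm_sub (p n d : ℕ) (f g : ℕ → ZMod p) :
    dm p n d f - dm p n d g = dm p n d (fun c => f c - g c) := by
  ext r c
  simp only [Matrix.sub_apply, dm_apply]
  split_ifs <;> simp

lemma dm_smul (p n d : ℕ) (a : ZMod p) (f : ℕ → ZMod p) :
    a • dm p n d f = dm p n d (fun c => a * f c) := by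
  ext r c
  simp only [Matrix.smul_apply, dm_apply, smul_eq_mul]
  split_ifs <;> simp

lemma dm_congr (p n d : ℕ) {f g : ℕ → ZMod p} (h : ∀ c, f c = g c) :
    dm p n d f = dm p n d g := by
  ext r c; simp only [dm_apply]; split_ifs <;> simp [h]

lemma dm_zero (p n d : ℕ) : dm p n d (fun _ => 0) = 0 := by
  ext r c; simp only [dm_apply]; split_ifs <;> rfl

lemma dm_of_ge (p n d : ℕ) (hd : n ≤ d) (f : ℕ → ZMod p) : dm p n d f = 0 := by
  ext r c
  simp only [dm_apply]
  rw [if_neg (by omega)]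
  rfl

/-- the parity-`e` subdiagonal shift. -/
def shm (p n e : ℕ) : Mat p n := dm p n 1 (fun c => if c % 2 = e % 2 then 1 else 0)

lemma shm_congr (p n : ℕ) {e₁ e₂ : ℕ} (h : e₁ % 2 = e₂ % 2) : shm p n e₁ = shm p n e₂ := by
  unfold shm; exact dm_congr _ _ _ (fun c => by rw [h])

lemma shm_sq (p n e : ℕ) : shm p n e * shm p n e = 0 := by
  unfold shm
  rw [dm_mul, ← dm_zero p n 2]
  apply dm_congr
  intro c
  split_ifs with h1 h2 <;> first | omega | simp

/-- The filtration predicate: all entries with `r < c + m` vanish. -/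
def InF (p n m : ℕ) (M : Mat p n) : Prop :=
  ∀ r c : Fin n, (r : ℕ) < (c : ℕ) + m → M r c = 0

lemma InF_zero (p n m : ℕ) : InF p n m 0 := fun _ _ _ => rfl

lemma InF_one (p n : ℕ) : InF p n 0 1 := by
  intro r c h
  exact Matrix.one_apply_ne (by intro he; subst he; omega)

lemma InF_add {p n m : ℕ} {M N : Mat p n} (hM : InF p n m M) (hN : InF p n m N) :
    InF p n m (M + N) := by
  intro r c h; simp [Matrix.add_apply, hM r c h, hN r c h]

lemma InF_neg {p n m : ℕ} {M : Mat p n} (hM : InF p n m M) : InF p n m (-M) := by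
  intro r c h; simp [Matrix.neg_apply, hM r c h]

lemma InF_sub {p n m : ℕ} {M N : Mat p n} (hM : InF p n m M) (hN : InF p n m N) :
    InF p n m (M - N) := by
  intro r c h; simp [Matrix.sub_apply, hM r c h, hN r c h]

lemma InF_mono {p n m m' : ℕ} (hm : m' ≤ m) {M : Mat p n} (hM : InF p n m M) :
    InF p n m' M := fun r c h => hM r c (by omega)

lemma InF_mul {p n s t : ℕ} {M N : Mat p n} (hM : InF p n s M) (hN : InF p n t N) :
    InF p n (s + t) (M * N) := by
  intro r c h
  rw [Matrix.mul_apply]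
  apply Finset.sum_eq_zero
  intro j _
  by_cases h1 : (r : ℕ) < (j : ℕ) + s
  · rw [hM r j h1, zero_mul]
  · rw [hN j c (by omega), mul_zero]

lemma InF_pow {p n : ℕ} {M : Mat p n} (hM : InF p n 1 M) (t : ℕ) : InF p n t (M ^ t) := by
  induction t with
  | zero => simpa using InF_one p n
  | succ t ih => rw [pow_succ]; exact InF_mul ih hM

lemma InF_top {p n : ℕ} {M : Mat p n} (hM : InF p n n M) : M = 0 := by
  ext r c
  exact hM r c (by omega)

lemma InF_dm (p n d : ℕ) (f : ℕ → ZMod p) : InF p n d (dm p n d f) := by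
  intro r c h
  rw [dm_apply, if_neg (by omega)]

lemma InF_shm (p n e : ℕ) : InF p n 1 (shm p n e) := InF_dm p n 1 _

lemma InF_sum {p n m : ℕ} {s : Finset ℕ} {f : ℕ → Mat p n}
    (h : ∀ t ∈ s, InF p n m (f t)) : InF p n m (∑ t ∈ s, f t) := by
  classical
  induction s using Finset.induction_on with
  | empty => simpa using InF_zero p n m
  | insert _ _ hns ih =>
      rw [Finset.sum_insert hns]
      exact InF_add (h _ (Finset.mem_insert_self _ _))
        (ih (fun t ht => h t (Finset.mem_insert_of_mem ht)))


lemma one_add_shm_pow (p n e : ℕ) (m : ℕ) :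
    (1 + shm p n e) ^ m = 1 + (m : ZMod p) • shm p n e := by
  induction m with
  | zero => simp
  | succ m ih =>
      rw [pow_succ, ih]
      have h2 : ((m : ZMod p) • shm p n e) * shm p n e = 0 := by
        rw [smul_mul_assoc, shm_sq, smul_zero]
      push_cast
      rw [add_mul, mul_add, mul_add, h2]
      simp [add_smul, add_assoc, add_comm, add_left_comm]

lemma one_add_mul_one_sub (p n e : ℕ) :
    (1 + shm p n e) * (1 - shm p n e) = 1 := by
  have h := shm_sq p n e
  rw [mul_one_sub, add_mul, one_mul, h]
  noncomm_ring

lemma one_sub_mul_one_add (p n e : ℕ) :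
    (1 - shm p n e) * (1 + shm p n e) = 1 := by
  have h := shm_sq p n e
  rw [one_sub_mul, mul_add, mul_one, h]
  noncomm_ring

/-- The unipotent unit `1 + shm`. -/
def Xu (p n e : ℕ) : (Mat p n)ˣ :=
  ⟨1 + shm p n e, 1 - shm p n e, one_add_mul_one_sub p n e, one_sub_mul_one_add p n e⟩

lemma Xu_pow_p (p n e : ℕ) : (Xu p n e) ^ p = 1 := by
  apply Units.ext
  rw [Units.val_pow_eq_pow_val, Units.val_one]
  show (1 + shm p n e) ^ p = 1
  rw [one_add_shm_pow, ZMod.natCast_self, zero_smul, add_zero]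

lemma Xu_pow_mod (p n e : ℕ) (m : ℕ) : (Xu p n e) ^ (m % p) = (Xu p n e) ^ m := by
  conv_rhs => rw [← Nat.div_add_mod m p]
  rw [pow_add, pow_mul, Xu_pow_p, one_pow, one_mul]

/-- The homomorphism `C_p →* units` sending the generator to `Xu`. -/
def fhom (p n e : ℕ) [NeZero p] : Cp p →* (Mat p n)ˣ where
  toFun z := (Xu p n e) ^ (Multiplicative.toAdd z).val
  map_one' := by
    show (Xu p n e) ^ (Multiplicative.toAdd (1 : Cp p)).val = 1
    rw [toAdd_one, ZMod.val_zero, pow_zero]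
  map_mul' z w := by
    show (Xu p n e) ^ (Multiplicative.toAdd (z * w)).val = _
    rw [toAdd_mul, ZMod.val_add, Xu_pow_mod, pow_add]

/-- inverse of a unipotent unit is "triangular" : `InF 0`. -/
lemma inv_InF0 {p n : ℕ} (g : (Mat p n)ˣ) (hg : InF p n 1 ((g : Mat p n) - 1)) :
    InF p n 0 (↑(g⁻¹) : Mat p n) := by
  set u : Mat p n := (g : Mat p n) - 1 with hu
  have hgu : (g : Mat p n) = 1 + u := by rw [hu]; noncomm_ring
  have hun : ∀ t, InF p n t (u ^ t) := InF_pow hg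
  have hn : (-u) ^ n = 0 := InF_top (InF_pow (InF_neg hg) n)
  have hkey : (∑ t ∈ Finset.range n, (-u) ^ t) * (g : Mat p n) = 1 := by
    have h1 := geom_sum_mul (-u) n
    rw [hn] at h1
    have h2 : (-u) - 1 = -(g : Mat p n) := by rw [hgu]; noncomm_ring
    rw [h2] at h1
    have h3 : (∑ t ∈ Finset.range n, (-u) ^ t) * (g : Mat p n) = -(0 - 1) := by
      rw [← h1]; noncomm_ring
    rw [h3]; noncomm_ring
  have hinv : (↑(g⁻¹) : Mat p n) = ∑ t ∈ Finset.range n, (-u) ^ t :=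
    Units.inv_eq_of_mul_eq_one_left hkey
  rw [hinv]
  apply InF_sum
  intro t _
  apply InF_mono (Nat.zero_le t)
  apply InF_pow
  exact InF_neg hg

/-- The congruence subgroup `Γ'_j = {g : g - 1 ∈ Filt (j+1)}`. -/
def Gam (p n j : ℕ) : Subgroup (Mat p n)ˣ where
  carrier := {g | InF p n (j + 1) ((g : Mat p n) - 1)}
  one_mem' := by
    show InF p n (j + 1) ((1 : Mat p n) - 1)
    simpa using InF_zero p n (j + 1)
  mul_mem' := by
    intro a b ha hb
    show InF p n (j + 1) ((↑(a * b) : Mat p n) - 1)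
    have : (↑(a * b) : Mat p n) - 1 =
        ((a : Mat p n) - 1) * ((b : Mat p n) - 1) + ((a : Mat p n) - 1) + ((b : Mat p n) - 1) := by
      rw [Units.val_mul]; noncomm_ring
    rw [this]
    exact InF_add (InF_add (InF_mono (by omega) (InF_mul ha hb)) ha) hb
  inv_mem' := by
    intro g hg
    show InF p n (j + 1) ((↑(g⁻¹) : Mat p n) - 1)
    have h1 : InF p n 1 ((g : Mat p n) - 1) := InF_mono (by omega) hg
    have h0 : InF p n 0 (↑(g⁻¹) : Mat p n) := inv_InF0 g h1
    have : (↑(g⁻¹) : Mat p n) - 1 = (↑(g⁻¹) : Mat p n) * (-(((g : Mat p n)) - 1)) := by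
      have hgg : (↑(g⁻¹) : Mat p n) * (g : Mat p n) = 1 := by
        rw [← Units.val_mul, inv_mul_cancel, Units.val_one]
      rw [mul_neg, mul_sub, hgg, mul_one]
      noncomm_ring
    rw [this]
    have := InF_mul h0 (InF_neg hg)
    simpa using this

lemma mem_Gam_iff {p n j : ℕ} (g : (Mat p n)ˣ) :
    g ∈ Gam p n j ↔ InF p n (j + 1) ((g : Mat p n) - 1) := Iff.rfl

/-- elementwise commutator estimate -/
lemma commutator_mem_Gam {p n s : ℕ} {g h : (Mat p n)ˣ}
    (hg : g ∈ Gam p n s) (hh : h ∈ Gam p n 0) : ⁅g, h⁆ ∈ Gam p n (s + 1) := by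
  rw [mem_Gam_iff]
  set u : Mat p n := (g : Mat p n) - 1 with hu
  set c : Mat p n := (h : Mat p n) - 1 with hc
  have hucu : InF p n (s + 1) u := hg
  have hcc : InF p n 1 c := hh
  have hval : (↑(⁅g, h⁆) : Mat p n) - 1 = (u * c - c * u) * ((↑(g⁻¹) : Mat p n) * (↑(h⁻¹) : Mat p n)) := by
    have e1 : u * c - c * u = (g : Mat p n) * h - (h : Mat p n) * g := by
      rw [hu, hc]; noncomm_ring
    have e2 : (↑(⁅g, h⁆) : Mat p n) = (g : Mat p n) * h * ↑(g⁻¹) * ↑(h⁻¹) := by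
      rw [commutatorElement_def]
      simp [Units.val_mul]
    have hgg : (g : Mat p n) * ↑(g⁻¹) = 1 := by
      rw [← Units.val_mul, mul_inv_cancel, Units.val_one]
    have hhh : (h : Mat p n) * ↑(h⁻¹) = 1 := by
      rw [← Units.val_mul, mul_inv_cancel, Units.val_one]
    rw [e1, e2]
    calc (g : Mat p n) * h * ↑(g⁻¹) * ↑(h⁻¹) - 1
        = ((g : Mat p n) * h - (h : Mat p n) * g) * (↑(g⁻¹) * ↑(h⁻¹))
          + (h : Mat p n) * ((g : Mat p n) * ↑(g⁻¹)) * ↑(h⁻¹) - 1 := by noncomm_ring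
      _ = ((g : Mat p n) * h - (h : Mat p n) * g) * (↑(g⁻¹) * ↑(h⁻¹)) := by
          rw [hgg, mul_one, hhh]; noncomm_ring
  rw [hval]
  have hB : InF p n (s + 2) (u * c - c * u) :=
    InF_sub (InF_mono (by omega) (InF_mul hucu hcc)) (InF_mono (by omega) (InF_mul hcc hucu))
  have hg0 : InF p n 0 (↑(g⁻¹) : Mat p n) := inv_InF0 g (InF_mono (by omega) hucu)
  have hh0 : InF p n 0 (↑(h⁻¹) : Mat p n) := inv_InF0 h hcc
  have := InF_mul hB (InF_mul hg0 hh0)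
  simpa using this


/-- coefficient function for the graded Lie element of weight `t+1`. -/
def eps (p t c : ℕ) : ZMod p :=
  if t % 2 = 0 then (if c % 2 = 0 then 1 else 0) else (if c % 2 = 0 then -1 else 1)

/-- iterated Lie bracket of the letter matrices along the alternating pattern. -/
def Lb (p n : ℕ) : ℕ → Mat p n
  | 0 => shm p n 0
  | (t+1) => Lb p n t * shm p n (t + 1) - shm p n (t + 1) * Lb p n t

lemma Lb_succ (p n t : ℕ) :
    Lb p n (t + 1) = Lb p n t * shm p n (t + 1) - shm p n (t + 1) * Lb p n t := rfl

lemma Lb_eq (p n : ℕ) (t : ℕ) :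
    Lb p n t = ((2 : ZMod p) ^ (t / 2)) • dm p n (t + 1) (eps p t) := by
  induction t with
  | zero =>
      show shm p n 0 = _
      rw [pow_zero, one_smul]
      unfold shm
      apply dm_congr
      intro c
      simp [eps]
  | succ t ih =>
      rw [Lb_succ, ih]
      unfold shm
      rw [smul_mul_assoc, mul_smul_comm, ← smul_sub, dm_mul, dm_mul]
      have harith : 1 + (t + 1) = t + 1 + 1 := by omega
      rw [harith, dm_sub]
      simp only [dm_smul]
      apply dm_congr
      intro c
      simp only [eps]
      split_ifs <;>
        first
          | (exfalso; omega)
          | (rw [show (t+1)/2 = t/2 from by omega]; ring)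
          | (rw [show (t+1)/2 = t/2 + 1 from by omega]; ring)

section Word

variable {p : ℕ} (gA gB : FP p)

/-- the alternating left-normed commutator word, starting with `gB`. -/
def lw : ℕ → FP p
  | 0 => gB
  | (t+1) =>
      (lw t)⁻¹ * (if t % 2 = 1 then gB else gA)⁻¹ * lw t * (if t % 2 = 1 then gB else gA)

lemma lw_succ (t : ℕ) :
    lw gA gB (t+1) =
      (lw gA gB t)⁻¹ * (if t % 2 = 1 then gB else gA)⁻¹ * lw gA gB t *
        (if t % 2 = 1 then gB else gA) := rfl

lemma lw_mem (t : ℕ) : lw gA gB t ∈ (⊤ : Subgroup (FP p)).lowerCentralSeries t := by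
  induction t with
  | zero => trivial
  | succ t ih =>
      have : lw gA gB (t+1) = ⁅(lw gA gB t)⁻¹, (if t % 2 = 1 then gB else gA)⁻¹⁆ := by
        rw [lw_succ, commutatorElement_def]
        group
      have hdef : (⊤ : Subgroup (FP p)).lowerCentralSeries (t+1) = ⁅(⊤ : Subgroup (FP p)).lowerCentralSeries t, ⊤⁆ := rfl
      rw [this, hdef]
      exact Subgroup.commutator_mem_commutator (Subgroup.inv_mem _ ih) (Subgroup.mem_top _)

end Word

section Lead

variable {p n : ℕ} (ψ : FP p →* (Mat p n)ˣ) (gA gB : FP p)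

/-- if all images are unitriangular, the lower central series maps into the congruence
filtration. -/
lemma map_lcs_le_Gam (hrange : ∀ q, InF p n 1 ((↑(ψ q) : Mat p n) - 1)) :
    ∀ t, ∀ q ∈ (⊤ : Subgroup (FP p)).lowerCentralSeries t, ψ q ∈ Gam p n t := by
  intro t
  induction t with
  | zero => exact fun q _ => hrange q
  | succ t ih =>
      intro q hq
      have hdef : (⊤ : Subgroup (FP p)).lowerCentralSeries (t+1) = ⁅(⊤ : Subgroup (FP p)).lowerCentralSeries t, ⊤⁆ := rfl
      rw [hdef] at hq
      have hle : ⁅(⊤ : Subgroup (FP p)).lowerCentralSeries t, (⊤ : Subgroup (FP p))⁆ ≤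
          Subgroup.comap ψ (Gam p n (t+1)) := by
        rw [Subgroup.commutator_le]
        intro g₁ hg₁ g₂ _
        show ψ ⁅g₁, g₂⁆ ∈ Gam p n (t+1)
        rw [map_commutatorElement]
        exact commutator_mem_Gam (ih g₁ hg₁) (hrange g₂)
      exact hle hq

/-- The leading-term computation for the word `lw`. -/
lemma lead (hrange : ∀ q, InF p n 1 ((↑(ψ q) : Mat p n) - 1))
    (hA : (↑(ψ gA) : Mat p n) = 1 + shm p n 1)
    (hB : (↑(ψ gB) : Mat p n) = 1 + shm p n 0) :
    ∀ t, InF p n (t + 2) ((↑(ψ (lw gA gB t)) : Mat p n) - 1 - Lb p n t) := by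
  intro t
  induction t with
  | zero =>
      show InF p n 2 ((↑(ψ gB) : Mat p n) - 1 - shm p n 0)
      rw [hB]
      simpa using InF_zero p n 2
  | succ t ih =>
      -- names
      set g : (Mat p n)ˣ := ψ (lw gA gB t) with hgdef
      set L : FP p := if t % 2 = 1 then gB else gA with hLdef
      set c : Mat p n := shm p n (t + 1) with hcdef
      have hc2 : c * c = 0 := shm_sq p n (t+1)
      have hL : (↑(ψ L) : Mat p n) = 1 + c := by
        rw [hLdef, hcdef]
        by_cases ht : t % 2 = 1
        · rw [if_pos ht, hB, shm_congr p n (show (0:ℕ) % 2 = (t+1) % 2 from by omega)]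
        · rw [if_neg ht, hA, shm_congr p n (show (1:ℕ) % 2 = (t+1) % 2 from by omega)]
      have hLinv : (↑((ψ L)⁻¹) : Mat p n) = 1 - c := by
        apply Units.inv_eq_of_mul_eq_one_left
        rw [hL, one_sub_mul, mul_add, mul_one, hc2]
        noncomm_ring
      set u : Mat p n := (↑g : Mat p n) - 1 with hudef
      have hg1u : (↑g : Mat p n) = 1 + u := by rw [hudef]; noncomm_ring
      have hu1 : InF p n (t + 1) u := map_lcs_le_Gam ψ hrange t _ (lw_mem gA gB t)
      have hgi : InF p n 1 ((↑(g⁻¹) : Mat p n) - 1) := (Gam p n 0).inv_mem (hrange _)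
      have hgi0 : InF p n 0 (↑(g⁻¹) : Mat p n) := inv_InF0 g (hrange _)
      -- value of the next word
      have hval : (↑(ψ (lw gA gB (t+1))) : Mat p n) =
          ↑(g⁻¹) * ((1 - c) * ((↑g : Mat p n) * (1 + c))) := by
        rw [lw_succ, map_mul, map_mul, map_mul, map_inv, map_inv]
        rw [Units.val_mul, Units.val_mul, Units.val_mul, hLinv, hL, hgdef]
        noncomm_ring
      set B : Mat p n := u * c - c * u with hBdef
      have hBf : InF p n (t + 2) B :=
        InF_sub (InF_mono (by omega) (InF_mul hu1 (InF_shm p n (t+1))))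
          (InF_mono (by omega) (InF_mul (InF_shm p n (t+1)) hu1))
      have hmain : (↑(ψ (lw gA gB (t+1))) : Mat p n) = 1 + ↑(g⁻¹) * ((1 - c) * B) := by
        rw [hval]
        have e1 : (↑g : Mat p n) * (1 + c) = (1 + c) * ↑g + B := by
          rw [hBdef, hg1u]; noncomm_ring
        rw [e1, mul_add, mul_add]
        have e2 : (1 - c) * ((1 + c) * (↑g : Mat p n)) = ↑g - c * (c * ↑g) := by
          noncomm_ring
        rw [e2, ← mul_assoc c c, hc2, zero_mul, sub_zero]
        have e3 : (↑(g⁻¹) : Mat p n) * ↑g = 1 := by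
          rw [← Units.val_mul, inv_mul_cancel, Units.val_one]
        rw [e3]
      rw [hmain]
      have hsplit : 1 + (↑(g⁻¹) : Mat p n) * ((1 - c) * B) - 1 - Lb p n (t+1) =
          (↑(g⁻¹) * (1 - c) - 1) * B + ((u - Lb p n t) * c - c * (u - Lb p n t)) := by
        rw [Lb_succ, ← hcdef, hBdef]
        noncomm_ring
      rw [hsplit]
      apply InF_add
      · have hd : InF p n 1 ((↑(g⁻¹) : Mat p n) * (1 - c) - 1) := by
          have : (↑(g⁻¹) : Mat p n) * (1 - c) - 1 =
              ((↑(g⁻¹) : Mat p n) - 1) - ↑(g⁻¹) * c := by noncomm_ring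
          rw [this]
          exact InF_sub hgi (by simpa using InF_mul hgi0 (InF_shm p n (t+1)))
        exact InF_mono (by omega) (InF_mul hd hBf)
      · have hum : InF p n (t + 2) (u - Lb p n t) := ih
        exact InF_sub
          (InF_mono (by omega) (InF_mul hum (InF_shm p n (t+1))))
          (InF_mono (by omega) (InF_mul (InF_shm p n (t+1)) hum))

end Lead

/-- any group hom maps the lower central series into the lower central series. -/
lemma map_lcs_mem {G G' : Type*} [Group G] [Group G'] (f : G →* G') :
    ∀ t, ∀ q ∈ (⊤ : Subgroup G).lowerCentralSeries t, f q ∈ (⊤ : Subgroup G').lowerCentralSeries t := by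
  intro t
  induction t with
  | zero => intro q _; trivial
  | succ t ih =>
      intro q hq
      have hdef : (⊤ : Subgroup G).lowerCentralSeries (t+1) = ⁅(⊤ : Subgroup G).lowerCentralSeries t, ⊤⁆ := rfl
      have hdef' : (⊤ : Subgroup G').lowerCentralSeries (t+1) = ⁅(⊤ : Subgroup G').lowerCentralSeries t, ⊤⁆ := rfl
      rw [hdef] at hq
      rw [hdef']
      have hle : ⁅(⊤ : Subgroup G).lowerCentralSeries t, (⊤ : Subgroup G)⁆ ≤
          Subgroup.comap f ⁅(⊤ : Subgroup G').lowerCentralSeries t, ⊤⁆ := by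
        rw [Subgroup.commutator_le]
        intro a ha b _
        rw [Subgroup.mem_comap, map_commutatorElement]
        exact Subgroup.commutator_mem_commutator (ih a ha) (Subgroup.mem_top _)
      exact hle hq

lemma core (p i : ℕ) (hp : p.Prime) (hp2 : p ≠ 2) (hiodd : i % 2 = 1)
    (gA gB : FP p) (ψ : FP p →* (Mat p (i+1))ˣ)
    (hrange : ∀ q, InF p (i+1) 1 ((↑(ψ q) : Mat p (i+1)) - 1))
    (hA : (↑(ψ gA) : Mat p (i+1)) = 1 + shm p (i+1) 1)
    (hB : (↑(ψ gB) : Mat p (i+1)) = 1 + shm p (i+1) 0) :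
    ∃ w ∈ (⊤ : Subgroup (FP p ⧸ (⊤ : Subgroup (FP p)).lowerCentralSeries i)).lowerCentralSeries (i - 1),
      ∀ h : FP p ⧸ (⊤ : Subgroup (FP p)).lowerCentralSeries i,
        (QuotientGroup.mk gA : FP p ⧸ (⊤ : Subgroup (FP p)).lowerCentralSeries i)⁻¹ * h⁻¹ *
          QuotientGroup.mk gA * h ≠ w := by
  haveI : Fact p.Prime := ⟨hp⟩
  have hi1 : 1 ≤ i := by omega
  classical
  -- ψ kills γ_{i+1}(F)
  have hker : (⊤ : Subgroup (FP p)).lowerCentralSeries i ≤ ψ.ker := by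
    intro q hq
    have h1 : ψ q ∈ Gam p (i+1) i := map_lcs_le_Gam ψ hrange i q hq
    have h2 : (↑(ψ q) : Mat p (i+1)) - 1 = 0 := InF_top h1
    rw [MonoidHom.mem_ker]
    apply Units.ext
    rw [Units.val_one]
    rw [sub_eq_zero] at h2
    exact h2
  set ψb := QuotientGroup.lift _ ψ hker with hψb
  refine ⟨QuotientGroup.mk (lw gA gB (i-1)), ?_, ?_⟩
  · exact map_lcs_mem (QuotientGroup.mk' _) (i-1) _ (lw_mem gA gB (i-1))
  · intro h heq
    set ν : ZMod p := (2 : ZMod p) ^ ((i-1)/2) with hνdef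
    have h2ne : (2 : ZMod p) ≠ 0 := by
      have : ((2 : ℕ) : ZMod p) ≠ 0 := by
        rw [Ne, ZMod.natCast_eq_zero_iff]
        intro hdvd
        exact hp2 ((Nat.prime_dvd_prime_iff_eq hp Nat.prime_two).mp hdvd)
      simpa using this
    have hνne : ν ≠ 0 := pow_ne_zero _ h2ne
    set A : Mat p (i+1) := shm p (i+1) 1 with hAdef
    -- the value of the word
    have hW'eq : Lb p (i+1) (i-1) = dm p (i+1) i (fun c => ν * eps p (i-1) c) := by
      rw [Lb_eq, show i - 1 + 1 = i from by omega, dm_smul]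
    set W : Mat p (i+1) := dm p (i+1) i (fun c => ν * eps p (i-1) c) with hWdef
    have hlead := lead ψ gA gB hrange hA hB (i-1)
    rw [show i - 1 + 2 = i + 1 from by omega, hW'eq] at hlead
    have hwval : (↑(ψ (lw gA gB (i-1))) : Mat p (i+1)) = 1 + W := by
      have h3 := InF_top hlead
      rw [sub_sub, sub_eq_zero] at h3
      exact h3
    -- push the hypothesized equation through ψb
    have happ : (ψ gA)⁻¹ * (ψb h)⁻¹ * ψ gA * ψb h = ψ (lw gA gB (i-1)) := by
      have h4 := congrArg ψb heq
      rw [map_mul, map_mul, map_mul, map_inv, map_inv] at h4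
      rw [hψb, QuotientGroup.lift_mk, QuotientGroup.lift_mk] at h4
      exact h4
    set G : (Mat p (i+1))ˣ := ψb h with hGdef
    have hAinv : (↑((ψ gA)⁻¹) : Mat p (i+1)) = 1 - A := by
      apply Units.inv_eq_of_mul_eq_one_left
      rw [hA]
      exact one_sub_mul_one_add p (i+1) 1
    have hvals : (1 - A) * ↑(G⁻¹) * (1 + A) * ↑G = 1 + W := by
      have h5 := congrArg (Units.val) happ
      rw [Units.val_mul, Units.val_mul, Units.val_mul, hwval, hAinv, hA] at h5
      exact h5
    have hAW : A * W = 0 := by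
      rw [hAdef, hWdef]
      unfold shm
      rw [dm_mul]
      exact dm_of_ge p (i+1) (1+i) (by omega) _
    set P : Mat p (i+1) := ↑G with hPdef
    set Pinv : Mat p (i+1) := ↑(G⁻¹) with hPinvdef
    have hPP : P * Pinv = 1 := by
      rw [hPdef, hPinvdef, ← Units.val_mul, mul_inv_cancel, Units.val_one]
    have hPiP : Pinv * P = 1 := by
      rw [hPdef, hPinvdef, ← Units.val_mul, inv_mul_cancel, Units.val_one]
    have hconj : Pinv * A * P = A + W := by
      have e6 : (1 + A) * ((1 - A) * (Pinv * ((1 + A) * P))) = (1 + A) * (1 + W) := by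
        have hX : (1 - A) * Pinv * (1 + A) * P = (1 - A) * (Pinv * ((1 + A) * P)) := by
          noncomm_ring
        rw [← hX, hvals]
      rw [← mul_assoc (1 + A) (1 - A)] at e6
      rw [one_add_mul_one_sub p (i+1) 1, one_mul] at e6
      have e7 : (1 + A) * (1 + W) = 1 + A + W := by
        have : (1 + A) * (1 + W) = 1 + A + W + A * W := by noncomm_ring
        rw [this, hAW, add_zero]
      rw [e7] at e6
      have e8 : Pinv * ((1 + A) * P) = Pinv * P + Pinv * A * P := by noncomm_ring
      rw [e8, hPiP] at e6
      have e9 : (1 : Mat p (i+1)) + Pinv * A * P = 1 + (A + W) := by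
        rw [e6, add_assoc]
      exact add_left_cancel e9
    -- kernel comparison
    set ℓ : Fin (i+1) := ⟨i, by omega⟩ with hℓdef
    have hℓv : (ℓ : ℕ) = i := rfl
    have h0v : ((0 : Fin (i+1)) : ℕ) = 0 := rfl
    have hArow : ∀ c : Fin (i+1), A ℓ c = 0 := by
      intro c
      rw [hAdef]
      unfold shm
      rw [dm_apply]
      split_ifs with h1 h2 <;> first | (exfalso; omega) | rfl
    have hAcol : ∀ r : Fin (i+1), A r 0 = 0 := by
      intro r
      rw [hAdef]
      unfold shm
      rw [dm_apply]
      split_ifs with h1 h2 <;> first | (exfalso; omega) | rfl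
    have hWother : ∀ (r c : Fin (i+1)), (c : ℕ) ≠ 0 → W r c = 0 := by
      intro r c hc
      rw [hWdef, dm_apply, if_neg]
      have := r.isLt
      omega
    have hWl0 : W ℓ 0 = ν := by
      rw [hWdef, dm_apply, if_pos (by omega)]
      have heps : eps p (i-1) ((0 : Fin (i+1)) : ℕ) = 1 := by
        unfold eps
        rw [if_pos (by omega), if_pos (by omega)]
      rw [heps, mul_one]
    have hsum0 : ∀ v : Fin (i+1) → ZMod p, ((A + W).mulVec v) ℓ = ν * v 0 := by
      intro v
      show (∑ c, (A + W) ℓ c * v c) = ν * v 0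
      rw [Finset.sum_eq_single (0 : Fin (i+1))]
      · rw [Matrix.add_apply, hArow 0, hWl0, zero_add]
      · intro c _ hc
        have hc' : (c : ℕ) ≠ 0 := fun hcc => hc (Fin.ext hcc)
        rw [Matrix.add_apply, hArow c, hWother ℓ c hc', add_zero, zero_mul]
      · intro hmem; exact absurd (Finset.mem_univ _) hmem
    have hWmul : ∀ v : Fin (i+1) → ZMod p, v 0 = 0 → W.mulVec v = 0 := by
      intro v hv
      funext r
      rw [Pi.zero_apply]
      show (∑ c, W r c * v c) = 0
      apply Finset.sum_eq_zero
      intro c _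
      by_cases hc : (c : ℕ) = 0
      · have : c = 0 := Fin.ext hc
        subst this
        rw [hv, mul_zero]
      · rw [hWother r c hc, zero_mul]
    have hAe0 : A.mulVec (Pi.single (0 : Fin (i+1)) (1 : ZMod p)) = 0 := by
      funext r
      rw [Pi.zero_apply]
      show (∑ c, A r c * (Pi.single (0 : Fin (i+1)) (1 : ZMod p) : Fin (i+1) → ZMod p) c) = 0
      apply Finset.sum_eq_zero
      intro c _
      by_cases hc : c = 0
      · subst hc; rw [hAcol r, zero_mul]
      · rw [Pi.single_eq_of_ne hc, mul_zero]
    set K2 := LinearMap.ker (Matrix.mulVecLin A) with hK2def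
    set K1 := LinearMap.ker (Matrix.mulVecLin (A + W)) with hK1def
    have hmemK1 : ∀ v, v ∈ K1 ↔ (A + W).mulVec v = 0 := by
      intro v
      rw [hK1def, LinearMap.mem_ker, Matrix.mulVecLin_apply]
    have hmemK2 : ∀ v, v ∈ K2 ↔ A.mulVec v = 0 := by
      intro v
      rw [hK2def, LinearMap.mem_ker, Matrix.mulVecLin_apply]
    have hle : K1 ≤ K2 := by
      intro v hv
      have hv' : (A + W).mulVec v = 0 := (hmemK1 v).mp hv
      have hv0 : v 0 = 0 := by
        have h10 := congrFun hv' ℓ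
        rw [hsum0 v] at h10
        exact (mul_eq_zero.mp h10).resolve_left hνne
      rw [hmemK2]
      have h11 : A.mulVec v + W.mulVec v = 0 := by
        rw [← Matrix.add_mulVec]; exact hv'
      rw [hWmul v hv0, add_zero] at h11
      exact h11
    have hwit2 : Pi.single (0 : Fin (i+1)) (1 : ZMod p) ∈ K2 := (hmemK2 _).mpr hAe0
    have hwit1 : Pi.single (0 : Fin (i+1)) (1 : ZMod p) ∉ K1 := by
      intro hmem
      have hv' := (hmemK1 _).mp hmem
      have h12 := congrFun hv' ℓ
      rw [hsum0] at h12
      rw [Pi.single_eq_same, mul_one] at h12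
      exact hνne h12
    have hlt : K1 < K2 := lt_of_le_of_ne hle (by
      intro he
      rw [he] at hwit1
      exact hwit1 hwit2)
    -- transport along the conjugation
    let τ : (Fin (i+1) → ZMod p) ≃ₗ[ZMod p] (Fin (i+1) → ZMod p) :=
      LinearEquiv.ofLinear (Matrix.mulVecLin P) (Matrix.mulVecLin Pinv)
        (by
          apply LinearMap.ext
          intro v
          simp only [LinearMap.comp_apply, Matrix.mulVecLin_apply, LinearMap.id_apply]
          rw [Matrix.mulVec_mulVec, hPP, Matrix.one_mulVec])
        (by
          apply LinearMap.ext
          intro v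
          simp only [LinearMap.comp_apply, Matrix.mulVecLin_apply, LinearMap.id_apply]
          rw [Matrix.mulVec_mulVec, hPiP, Matrix.one_mulVec])
    have hτ : ∀ v, τ v = P.mulVec v := fun v => rfl
    have hcomap : K1 = Submodule.comap (τ : (Fin (i+1) → ZMod p) →ₗ[ZMod p] (Fin (i+1) → ZMod p)) K2 := by
      ext v
      rw [Submodule.mem_comap, hmemK1, hmemK2]
      show (A + W).mulVec v = 0 ↔ A.mulVec (τ v) = 0
      rw [hτ]
      constructor
      · intro hv'
        have h13 : A * P = P * (A + W) := by
          calc A * P = (P * Pinv) * (A * P) := by rw [hPP, one_mul]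
            _ = P * (Pinv * A * P) := by noncomm_ring
            _ = P * (A + W) := by rw [hconj]
        rw [Matrix.mulVec_mulVec, h13, ← Matrix.mulVec_mulVec, hv', Matrix.mulVec_zero]
      · intro hv'
        have h14 : (A + W).mulVec v = Pinv.mulVec (A.mulVec (P.mulVec v)) := by
          rw [Matrix.mulVec_mulVec, Matrix.mulVec_mulVec, ← hconj, mul_assoc]
        rw [h14, hv', Matrix.mulVec_zero]
    have hlt' := Submodule.finrank_lt_finrank_of_lt hlt
    rw [hcomap, Submodule.comap_equiv_eq_map_symm, LinearEquiv.finrank_map_eq] at hlt'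
    exact lt_irrefl _ hlt'

lemma Xu_mem_Gam (p n e : ℕ) : Xu p n e ∈ Gam p n 0 := by
  rw [mem_Gam_iff]
  show InF p n 1 ((1 + shm p n e) - 1)
  rw [add_sub_cancel_left]
  exact InF_shm p n e

lemma lift_mem_Gam (p n e1 e2 : ℕ) [NeZero p] (q : FP p) :
    (Monoid.Coprod.lift (fhom p n e1) (fhom p n e2)) q ∈ Gam p n 0 := by
  refine Monoid.Coprod.induction_on q (fun m => ?_) (fun m => ?_) (fun x y hx hy => ?_)
  · rw [Monoid.Coprod.lift_apply_inl]
    exact pow_mem (Xu_mem_Gam p n e1) _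
  · rw [Monoid.Coprod.lift_apply_inr]
    exact pow_mem (Xu_mem_Gam p n e2) _
  · rw [map_mul]
    exact mul_mem hx hy

lemma lift_val_xgen (p n : ℕ) [NeZero p] [Fact (1 < p)] (e1 e2 : ℕ) :
    (↑((Monoid.Coprod.lift (fhom p n e1) (fhom p n e2)) (xgen p)) : Mat p n) = 1 + shm p n e1 := by
  rw [xgen, Monoid.Coprod.lift_apply_inl]
  show (↑((Xu p n e1) ^ (Multiplicative.toAdd (Multiplicative.ofAdd (1 : ZMod p))).val) : Mat p n) = _
  rw [toAdd_ofAdd, ZMod.val_one, pow_one]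
  rfl

lemma lift_val_ygen (p n : ℕ) [NeZero p] [Fact (1 < p)] (e1 e2 : ℕ) :
    (↑((Monoid.Coprod.lift (fhom p n e1) (fhom p n e2)) (ygen p)) : Mat p n) = 1 + shm p n e2 := by
  rw [ygen, Monoid.Coprod.lift_apply_inr]
  show (↑((Xu p n e2) ^ (Multiplicative.toAdd (Multiplicative.ofAdd (1 : ZMod p))).val) : Mat p n) = _
  rw [toAdd_ofAdd, ZMod.val_one, pow_one]
  rfl

end CDNC

open CDNC in
/-- Let `p` be an odd prime, `F = ⟨x, y ∣ x^p, y^p⟩`, `i = k(p-1)+1` with `k ≥ 1`,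
and `H = F/γ_{i+1}(F)` (note `γ_{i+1}(F) = lowerCentralSeries F i` and
`γ_i(H) = lowerCentralSeries H (i-1)`), with `u, v` the images of `x, y`.
Then the commutator sets `{[u,h] : h ∈ H}` and `{[v,h] : h ∈ H}` do not cover `γ_i(H)`:
there are `w, z ∈ γ_i(H)` avoiding them. -/
theorem commutators_do_not_cover (p : ℕ) (hp : p.Prime) (hodd : Odd p)
    (k : ℕ) (hk : 1 ≤ k) (i : ℕ) (hi : i = k * (p - 1) + 1) :
    (∃ w ∈ (⊤ : Subgroup (FP p ⧸ (⊤ : Subgroup (FP p)).lowerCentralSeries i)).lowerCentralSeries (i - 1),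
      ∀ h : FP p ⧸ (⊤ : Subgroup (FP p)).lowerCentralSeries i,
        (QuotientGroup.mk (xgen p) : FP p ⧸ (⊤ : Subgroup (FP p)).lowerCentralSeries i)⁻¹ * h⁻¹ *
          QuotientGroup.mk (xgen p) * h ≠ w) ∧
    (∃ z ∈ (⊤ : Subgroup (FP p ⧸ (⊤ : Subgroup (FP p)).lowerCentralSeries i)).lowerCentralSeries (i - 1),
      ∀ h : FP p ⧸ (⊤ : Subgroup (FP p)).lowerCentralSeries i,
        (QuotientGroup.mk (ygen p) : FP p ⧸ (⊤ : Subgroup (FP p)).lowerCentralSeries i)⁻¹ * h⁻¹ *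
          QuotientGroup.mk (ygen p) * h ≠ z) := by
  have hp2 : p ≠ 2 := by
    rintro rfl
    rcases hodd with ⟨m, hm⟩
    omega
  haveI : Fact p.Prime := ⟨hp⟩
  haveI : NeZero p := ⟨hp.ne_zero⟩
  haveI : Fact (1 < p) := ⟨hp.one_lt⟩
  have hiodd : i % 2 = 1 := by
    have h1 : (k * (p - 1)) % 2 = 0 := by
      have h2 : (p - 1) % 2 = 0 := by
        rcases hodd with ⟨m, hm⟩
        omega
      rw [Nat.mul_mod, h2, mul_zero, Nat.zero_mod]
    omega
  constructor
  · exact core p i hp hp2 hiodd (xgen p) (ygen p)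
      (Monoid.Coprod.lift (fhom p (i+1) 1) (fhom p (i+1) 0))
      (fun q => lift_mem_Gam p (i+1) 1 0 q)
      (lift_val_xgen p (i+1) 1 0) (lift_val_ygen p (i+1) 1 0)
  · exact core p i hp hp2 hiodd (ygen p) (xgen p)
      (Monoid.Coprod.lift (fhom p (i+1) 0) (fhom p (i+1) 1))
      (fun q => lift_mem_Gam p (i+1) 0 1 q)
      (lift_val_ygen p (i+1) 0 1) (lift_val_xgen p (i+1) 0 1)
end

section
/- Let p be a prime and let G be a finite non-cyclic p-group generated by two elements a and b, where a has order p. Then the union of all conjugates of ⟨a⟩ intersects the union of all conjugates of ⟨b⟩ trivially; that is, for all g, h ∈ G, ⟨a⟩^g ∩ ⟨b⟩^h = 1. -/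
/-- If `G` is a finite non-cyclic `p`-group generated by `a` and `b`, where `a` has
order `p`, then any conjugate of `⟨a⟩` meets any conjugate of `⟨b⟩` trivially
(note `⟨a⟩^g = ⟨g⁻¹ a g⟩`). -/
theorem conj_zpowers_inter_trivial (p : ℕ) (hp : p.Prime)
    {G : Type*} [Group G] [Finite G] (hG : IsPGroup p G) (hnc : ¬ IsCyclic G)
    (a b : G) (hgen : Subgroup.closure {a, b} = ⊤) (ha : orderOf a = p) :
    ∀ g h : G,
      Subgroup.zpowers (g⁻¹ * a * g) ⊓ Subgroup.zpowers (h⁻¹ * b * h) = ⊥ := by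
  haveI : Fact p.Prime := ⟨hp⟩
  intro g h
  by_contra hne
  -- get a nontrivial element x of the intersection
  obtain ⟨x, hx, hx1⟩ : ∃ x, x ∈ Subgroup.zpowers (g⁻¹ * a * g) ⊓
      Subgroup.zpowers (h⁻¹ * b * h) ∧ x ≠ 1 := by
    by_contra hc
    push_neg at hc
    exact hne ((Subgroup.eq_bot_iff_forall _).mpr hc)
  set u := g⁻¹ * a * g with hu
  set c := h⁻¹ * b * h with hc
  have hxu : x ∈ Subgroup.zpowers u := hx.1
  have hxc : x ∈ Subgroup.zpowers c := hx.2
  -- u has order p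
  have hou : orderOf u = p := by
    have : u = (MulAut.conj g⁻¹) a := by
      simp [hu, MulAut.conj_apply, mul_assoc]
    have h2 := orderOf_injective ((MulAut.conj g⁻¹).toMonoidHom)
      (MulEquiv.injective _) a
    rw [hu]
    rw [show g⁻¹ * a * g = (MulAut.conj g⁻¹).toMonoidHom a by
      simp [MulAut.conj_apply, mul_assoc], h2]
    exact ha
  -- since ⟨u⟩ has prime order, u ∈ ⟨x⟩
  have huzx : u ∈ Subgroup.zpowers x := by
    have hcard : Nat.card (Subgroup.zpowers u) = p := by
      rw [Nat.card_zpowers, hou]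
    have hx1' : (⟨x, hxu⟩ : Subgroup.zpowers u) ≠ 1 := by
      simpa [Subtype.ext_iff] using hx1
    have := mem_zpowers_of_prime_card (g := (⟨x, hxu⟩ : Subgroup.zpowers u))
      (g' := (⟨u, Subgroup.mem_zpowers u⟩ : Subgroup.zpowers u)) hcard hx1'
    obtain ⟨k, hk⟩ := this
    refine ⟨k, ?_⟩
    simpa using congrArg (Subtype.val) hk
  -- hence u ∈ ⟨c⟩
  have hucz : u ∈ Subgroup.zpowers c :=
    (Subgroup.zpowers_le.mpr hxc) huzx
  -- the normal closure of {c} contains a and b, so it is ⊤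
  set N := Subgroup.normalClosure ({c} : Set G) with hN
  have hcN : c ∈ N := Subgroup.subset_normalClosure rfl
  have hbN : b ∈ N := by
    have : h * c * h⁻¹ ∈ N := Subgroup.normalClosure_normal.conj_mem c hcN h
    simpa [hc, mul_assoc] using this
  have haN : a ∈ N := by
    have huN : u ∈ N := (Subgroup.zpowers_le.mpr hcN) hucz
    have : g * u * g⁻¹ ∈ N := Subgroup.normalClosure_normal.conj_mem u huN g
    simpa [hu, mul_assoc] using this
  have hNtop : N = ⊤ := by
    rw [eq_top_iff, ← hgen]
    exact Subgroup.closure_le N |>.mpr (by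
      intro y hy
      rcases hy with rfl | hy
      · exact haN
      · simpa using hy ▸ hbN)
  -- but ⟨c⟩ is proper, so it lies in a coatom M which is normal; then N ≤ M < ⊤
  have hzc_ne_top : Subgroup.zpowers c ≠ ⊤ := by
    intro htop
    exact hnc ⟨⟨c, fun y => by
      have : y ∈ Subgroup.zpowers c := htop ▸ Subgroup.mem_top y
      exact this⟩⟩
  obtain ⟨M, hM, hle⟩ : ∃ M : Subgroup G, IsCoatom M ∧ Subgroup.zpowers c ≤ M := by
    rcases (Finite.to_isCoatomic (α := Subgroup G)).eq_top_or_exists_le_coatom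
      (Subgroup.zpowers c) with htop | ⟨M, hM, hle⟩
    · exact absurd htop hzc_ne_top
    · exact ⟨M, hM, hle⟩
  haveI : M.Normal := by
    have hnil : Group.IsNilpotent G := hG.isNilpotent
    exact Subgroup.NormalizerCondition.normal_of_coatom M (normalizerCondition_of_isNilpotent (G := G)) hM
  have hNle : N ≤ M :=
    Subgroup.normalClosure_le_normal (by
      intro y hy
      rcases hy with rfl
      exact hle (Subgroup.mem_zpowers c))
  rw [hNtop] at hNle
  exact hM.1 (top_le_iff.mp hNle)
end

section
/- Let p be a prime, let G be a finite p-group, and let x ∈ G \ Φ(G) be an element of order p, where Φ(G) is the Frattini subgroup of G. If t ∈ Φ(G) and t is not of the form [x,g] for any g ∈ G, then the union of all conjugates of ⟨x⟩ intersects the union of all conjugates of ⟨xt⟩ trivially; that is, for all g, h ∈ G, ⟨x⟩^g ∩ ⟨xt⟩^h = 1. -/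
open Subgroup

/-- In a finite p-group, every commutator lies in every maximal subgroup. -/
lemma comm_mem_coatom (p : ℕ) (hp : p.Prime) {G : Type*} [Group G] [Finite G]
    (hG : IsPGroup p G) {K : Subgroup G} (hK : IsCoatom K) (a b : G) :
    a * b * a⁻¹ * b⁻¹ ∈ K := by
  haveI : Fact p.Prime := ⟨hp⟩
  haveI : Group.IsNilpotent G := hG.isNilpotent
  haveI : K.Normal :=
    Subgroup.NormalizerCondition.normal_of_coatom K normalizerCondition_of_isNilpotent hK
  let π : G →* G ⧸ K := QuotientGroup.mk' K
  have hπ1 : ∀ k : G, π k = 1 ↔ k ∈ K := fun k => QuotientGroup.eq_one_iff k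
  haveI : Nontrivial (G ⧸ K) := by
    rcases subsingleton_or_nontrivial (G ⧸ K) with hs | hn
    · exact absurd (QuotientGroup.subgroup_eq_top_of_subsingleton K hs) hK.1
    · exact hn
  have hQ : IsPGroup p (G ⧸ K) := hG.to_quotient K
  haveI := hQ.center_nontrivial
  set C := (Subgroup.center (G ⧸ K)).comap π with hC
  have hKC : K ≤ C := fun k hk => by
    have : π k = 1 := (hπ1 k).mpr hk
    simp [hC, Subgroup.mem_comap, this, Subgroup.one_mem]
  rcases eq_or_lt_of_le hKC with hEq | hLt
  · exfalso
    have hmap : Subgroup.map π C = Subgroup.center (G ⧸ K) :=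
      Subgroup.map_comap_eq_self_of_surjective (QuotientGroup.mk'_surjective K) _
    rw [← hEq] at hmap
    have hbot : Subgroup.map π K = ⊥ := by
      rw [eq_bot_iff]
      rintro y ⟨k, hk, rfl⟩
      simpa [Subgroup.mem_bot] using (hπ1 k).mpr hk
    rw [hbot] at hmap
    obtain ⟨z, hz⟩ := exists_ne (1 : Subgroup.center (G ⧸ K))
    apply hz
    have hzb : (z : G ⧸ K) ∈ (⊥ : Subgroup (G ⧸ K)) := by rw [hmap]; exact z.2
    exact Subtype.ext (by simpa using hzb)
  · have hCtop : C = ⊤ := hK.2 C hLt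
    have hcen : π a ∈ Subgroup.center (G ⧸ K) := by
      have : a ∈ C := hCtop ▸ Subgroup.mem_top a
      exact this
    have hcomm : π b * π a = π a * π b := Subgroup.mem_center_iff.mp hcen (π b)
    rw [← hπ1]
    have : π (a * b * a⁻¹ * b⁻¹) = π a * π b * (π a)⁻¹ * (π b)⁻¹ := by
      simp [map_mul, map_inv]
    rw [this, ← hcomm]
    group

/-- In a finite p-group, every commutator lies in the Frattini subgroup. -/
lemma comm_mem_frattini (p : ℕ) (hp : p.Prime) {G : Type*} [Group G] [Finite G]
    (hG : IsPGroup p G) (a b : G) : a * b * a⁻¹ * b⁻¹ ∈ frattini G := by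
  have hdef : frattini G = ⨅ K ∈ {H : Subgroup G | IsCoatom H}, K := rfl
  rw [hdef]
  simp only [Subgroup.mem_iInf, Set.mem_setOf_eq]
  intro K hK
  exact comm_mem_coatom p hp hG hK a b

/-- Let `G` be a finite `p`-group and `x ∈ G \ Φ(G)` of order `p`. If `t ∈ Φ(G)` is not
of the form `[x,g] = x⁻¹g⁻¹xg` for any `g ∈ G`, then any conjugate of `⟨x⟩` meets any
conjugate of `⟨xt⟩` trivially (note `⟨x⟩^g = ⟨g⁻¹ x g⟩`). -/
theorem conj_zpowers_inter_trivial_of_not_commutator (p : ℕ) (hp : p.Prime)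
    {G : Type*} [Group G] [Finite G] (hG : IsPGroup p G)
    (x : G) (hx : x ∉ frattini G) (hox : orderOf x = p)
    (t : G) (ht : t ∈ frattini G) (htc : ∀ g : G, t ≠ x⁻¹ * g⁻¹ * x * g) :
    ∀ g h : G,
      Subgroup.zpowers (g⁻¹ * x * g) ⊓ Subgroup.zpowers (h⁻¹ * (x * t) * h) = ⊥ := by
  haveI : Fact p.Prime := ⟨hp⟩
  intro g h
  by_contra hne
  set a := g⁻¹ * x * g with ha
  set b := h⁻¹ * (x * t) * h with hb
  obtain ⟨y, hy, hy1⟩ : ∃ y, y ∈ Subgroup.zpowers a ⊓ Subgroup.zpowers b ∧ y ≠ 1 := by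
    by_contra hcon
    push_neg at hcon
    exact hne ((Subgroup.eq_bot_iff_forall _).mpr hcon)
  have hoa : orderOf a = p := by
    rw [← hox]
    exact (SemiconjBy.orderOf_eq g⁻¹ (show SemiconjBy g⁻¹ x (g⁻¹ * x * g) by
      show g⁻¹ * x = (g⁻¹ * x * g) * g⁻¹; group)).symm
  have hapow : a ^ (p : ℤ) = 1 := by
    rw [zpow_natCast, ← hoa, pow_orderOf_eq_one]
  obtain ⟨n, hn⟩ := Subgroup.mem_zpowers_iff.mp hy.1
  -- p does not divide n
  have hpn : ¬ ((p : ℤ) ∣ n) := by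
    intro hd
    apply hy1
    rw [← hn]
    exact orderOf_dvd_iff_zpow_eq_one.mp (by rw [hoa]; exact hd)
  have hprime : Prime (p : ℤ) := Nat.prime_iff_prime_int.mp hp
  -- a ∈ zpowers y
  have hcop : IsCoprime n (p : ℤ) := ((hprime.coprime_iff_not_dvd.mpr hpn).symm)
  obtain ⟨u, v, huv⟩ := hcop
  have hay : a ∈ Subgroup.zpowers y := by
    refine Subgroup.mem_zpowers_iff.mpr ⟨u, ?_⟩
    calc y ^ u = (a ^ n) ^ u * (a ^ (p : ℤ)) ^ v := by rw [hn, hapow]; group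
    _ = a ^ (n * u) * a ^ ((p : ℤ) * v) := by rw [← zpow_mul, ← zpow_mul]
    _ = a ^ (n * u + (p : ℤ) * v) := (zpow_add a _ _).symm
    _ = a ^ (1 : ℤ) := by rw [show n * u + (p : ℤ) * v = 1 by linarith]
    _ = a := zpow_one a
  have hab : a ∈ Subgroup.zpowers b :=
    (Subgroup.zpowers_le.mpr hy.2) hay
  obtain ⟨k, hk⟩ := Subgroup.mem_zpowers_iff.mp hab
  -- the quotient by the Frattini subgroup
  let π : G →* G ⧸ frattini G := QuotientGroup.mk' _
  have hπeq : ∀ w z : G, w⁻¹ * z ∈ frattini G → π z = π w := by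
    intro w z hwz
    have h1 : π (w⁻¹ * z) = 1 := (QuotientGroup.eq_one_iff _).mpr hwz
    rw [map_mul, map_inv] at h1
    rw [← mul_one (π w), ← h1]
    group
  have hπa : π a = π x := by
    apply hπeq
    have h1 : x⁻¹ * g⁻¹ * x⁻¹⁻¹ * g⁻¹⁻¹ ∈ frattini G := comm_mem_frattini p hp hG x⁻¹ g⁻¹
    have heq : x⁻¹ * a = x⁻¹ * g⁻¹ * x⁻¹⁻¹ * g⁻¹⁻¹ := by rw [ha]; group
    rw [heq]; exact h1
  have hπb : π b = π x := by
    apply hπeq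
    have h1 : x⁻¹ * h⁻¹ * x⁻¹⁻¹ * h⁻¹⁻¹ ∈ frattini G := comm_mem_frattini p hp hG x⁻¹ h⁻¹
    have h2 : h⁻¹ * t * h⁻¹⁻¹ ∈ frattini G :=
      Subgroup.Normal.conj_mem inferInstance t ht h⁻¹
    have heq : x⁻¹ * b = (x⁻¹ * h⁻¹ * x⁻¹⁻¹ * h⁻¹⁻¹) * (h⁻¹ * t * h⁻¹⁻¹) := by
      rw [hb]; group
    rw [heq]; exact mul_mem h1 h2
  have hπx1 : π x ≠ 1 := fun h1 => hx ((QuotientGroup.eq_one_iff x).mp h1)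
  have hoπx : orderOf (π x) = p := by
    have hd : orderOf (π x) ∣ p := hox ▸ orderOf_map_dvd π x
    rcases hp.eq_one_or_self_of_dvd _ hd with h1 | h1
    · exact absurd (orderOf_eq_one_iff.mp h1) hπx1
    · exact h1
  have key : ∀ j : ℤ, π x = (π x) ^ j → (p : ℤ) ∣ j - 1 := by
    intro j hj
    have h1 : (π x) ^ (j - 1) = 1 := by
      rw [zpow_sub, ← hj, zpow_one, mul_inv_cancel]
    have := orderOf_dvd_iff_zpow_eq_one.mpr h1
    rwa [hoπx] at this
  have hk1 : (p : ℤ) ∣ k - 1 := by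
    apply key k
    conv_lhs => rw [← hπa, ← hk]
    rw [map_zpow, hπb]
  have hpk : ¬ ((p : ℤ) ∣ k) := by
    intro hd
    have h1 : (p : ℤ) ∣ 1 := by simpa using dvd_sub hd hk1
    exact hp.ne_one (Nat.dvd_one.mp (by exact_mod_cast h1))
  obtain ⟨m, hm⟩ := IsPGroup.iff_orderOf.mp hG b
  have hbpow : b ^ ((p : ℤ) ^ m) = 1 := by
    have h1 : b ^ (p ^ m : ℕ) = 1 := by rw [← hm]; exact pow_orderOf_eq_one b
    rw [show ((p : ℤ) ^ m) = ((p ^ m : ℕ) : ℤ) by push_cast; ring, zpow_natCast, h1]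
  have hcop2 : IsCoprime k ((p : ℤ) ^ m) :=
    IsCoprime.pow_right ((hprime.coprime_iff_not_dvd.mpr hpk).symm)
  obtain ⟨u2, v2, huv2⟩ := hcop2
  have hba : b = a ^ u2 := by
    calc b = b ^ (u2 * k + v2 * ((p : ℤ) ^ m)) := by rw [huv2, zpow_one]
    _ = (b ^ k) ^ u2 * (b ^ ((p : ℤ) ^ m)) ^ v2 := by
        rw [zpow_add, mul_comm u2 k, mul_comm v2 _, zpow_mul, zpow_mul]
    _ = a ^ u2 := by rw [hk, hbpow, one_zpow, mul_one]
  have hu2 : (p : ℤ) ∣ u2 - 1 := by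
    apply key u2
    conv_lhs => rw [← hπb, hba]
    rw [map_zpow, hπa]
  obtain ⟨w, hw⟩ := hu2
  have hau : a ^ u2 = a := by
    have h1 : u2 = 1 + (p : ℤ) * w := by linarith
    rw [h1, zpow_add, zpow_one, zpow_mul, hapow, one_zpow, mul_one]
  have hba2 : b = a := hba.trans hau
  apply htc (g * h⁻¹)
  have h2 : x * t = h * a * h⁻¹ := by
    calc x * t = h * b * h⁻¹ := by rw [hb]; group
    _ = h * a * h⁻¹ := by rw [hba2]
  calc t = x⁻¹ * (x * t) := by group
  _ = x⁻¹ * (h * a * h⁻¹) := by rw [h2]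
  _ = x⁻¹ * (h * (g⁻¹ * x * g) * h⁻¹) := by rw [ha]
  _ = x⁻¹ * (g * h⁻¹)⁻¹ * x * (g * h⁻¹) := by group
end
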